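/- Let H be a graph on t vertices with dom(H) ≥ 1, let r ≥ 1, and let G be an S_r-free graph on n vertices (equivalently, Δ(G) ≤ r-1). Then dom(H) · N(H, G) ≤ n · C(r-1, t-1) · N(H↓1, K_{t-1}). -/

import Mathlib

/-- `N(H, G)`: the number of subgraphs of `G` isomorphic to `H`. -/
noncomputable def copyCount {α β : Type*} (H : SimpleGraph α) (G : SimpleGraph β) : ℕ :=
  Nat.card {T : G.Subgraph // Nonempty (T.coe ≃g H)}

/-- A dominating vertex of a graph: one adjacent to every other vertex. -/
def IsDomVert {α : Type*} (H : SimpleGraph α) (v : α) : Prop :=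
  ∀ w : α, w ≠ v → H.Adj v w

open SimpleGraph
attribute [local instance] Classical.propDecidable
set_option linter.unusedSectionVars false
set_option linter.unreachableTactic false
set_option linter.unusedTactic false


open SimpleGraph

attribute [local instance] Classical.propDecidable

instance subgraphFinite {V : Type*} [Finite V] (G : SimpleGraph V) : Finite G.Subgraph := by
  have : Function.Injective (fun S : G.Subgraph => (S.verts, S.Adj)) := by
    intro a b h
    simp only [Prod.mk.injEq] at h
    exact SimpleGraph.Subgraph.ext h.1 h.2
  exact Finite.of_injective _ this

/-- A dominating vertex of a graph: one adjacent to every other vertex. -/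

lemma swap_adj {α : Type*} [DecidableEq α] (H : SimpleGraph α) {w v₀ : α}
    (hw : IsDomVert H w) (hv : IsDomVert H v₀) (a b : α) :
    H.Adj (Equiv.swap w v₀ a) (Equiv.swap w v₀ b) ↔ H.Adj a b := by
  have key : ∀ x y : α, H.Adj x y → H.Adj (Equiv.swap w v₀ x) (Equiv.swap w v₀ y) := by
    intro x y hxy
    have hne : x ≠ y := hxy.ne
    rcases eq_or_ne w v₀ with h | hwv
    · subst h; simpa using hxy
    simp only [Equiv.swap_apply_def]
    split_ifs with h1 h2 h3 h4 h5 h6 h7 h8 <;> subst_vars <;>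
      first
        | exact hxy
        | (exact absurd rfl hne)
        | (exact (hw _ (by assumption)).symm)
        | (exact (hv _ (by assumption)).symm)
        | exact hw _ (by assumption)
        | exact hv _ (by assumption)
        | exact (hw _ hwv.symm)
        | exact (hv _ hwv)
        | exact (hw _ hwv.symm).symm
        | exact (hv _ hwv).symm
  constructor
  · intro h
    have := key _ _ h
    simpa using this
  · exact key a b


lemma deg_le {V : Type*} [Fintype V] [DecidableEq V] (G : SimpleGraph V) (r : ℕ) (hr : 1 ≤ r)
    (hfree : ∀ S : G.Subgraph,
      IsEmpty (S.coe ≃g completeBipartiteGraph (Fin 1) (Fin r)))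
    (v : V) : G.degree v ≤ r - 1 := by
  by_contra hlt
  push_neg at hlt
  have hge : r ≤ G.degree v := by omega
  obtain ⟨s, hsub, hscard⟩ := Finset.exists_subset_card_eq (s := G.neighborFinset v) hge
  have hadj : ∀ x ∈ s, G.Adj v x := fun x hx => (G.mem_neighborFinset v x).1 (hsub hx)
  have hvs : v ∉ s := fun h => G.loopless.irrefl v (hadj v h)
  set S : G.Subgraph :=
    { verts := insert v ↑s
      Adj := fun x y => (x = v ∧ y ∈ s) ∨ (y = v ∧ x ∈ s)
      adj_sub := by rintro x y (⟨rfl, hy⟩ | ⟨rfl, hx⟩)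
                    · exact hadj y hy
                    · exact (hadj x hx).symm
      edge_vert := by rintro x y (⟨rfl, hy⟩ | ⟨rfl, hx⟩)
                      · exact Set.mem_insert _ _
                      · exact Set.mem_insert_of_mem _ (by exact_mod_cast hx)
      symm := ⟨by rintro x y (⟨rfl, hy⟩ | ⟨rfl, hx⟩)
                  · exact Or.inr ⟨rfl, hy⟩
                  · exact Or.inl ⟨rfl, hx⟩⟩ } with hS
  apply (hfree S).false
  have es : {x // x ∈ s} ≃ Fin r := Finset.equivFinOfCardEq hscard
  refine ⟨Equiv.ofBijective (fun x : S.verts =>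
      if h : (x : V) = v then Sum.inl 0 else Sum.inr (es ⟨x, ?_⟩)) ⟨?_, ?_⟩, ?_⟩
  · rcases x.2 with h' | h'
    · exact absurd h' h
    · exact_mod_cast h'
  · rintro ⟨x, hx⟩ ⟨y, hy⟩ hxy
    by_cases h1 : x = v <;> by_cases h2 : y = v
    · exact Subtype.ext (h1.trans h2.symm)
    · simp only [h1, h2, dif_pos, dif_neg, not_false_iff] at hxy; exact absurd hxy (by simp)
    · simp only [h1, h2, dif_pos, dif_neg, not_false_iff] at hxy; exact absurd hxy (by simp)
    · simp only [h1, h2, dif_neg, not_false_iff] at hxy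
      have := es.injective (Sum.inr_injective hxy)
      have hval : x = y := congrArg Subtype.val this
      exact Subtype.ext hval
  · rintro (⟨i⟩ | j)
    · exact ⟨⟨v, Set.mem_insert _ _⟩, by simp [Fin.eq_zero]⟩
    · refine ⟨⟨(es.symm j : V), Set.mem_insert_of_mem _ (by simp)⟩, ?_⟩
      have hne : ((es.symm j : V)) ≠ v := fun h => hvs (h ▸ (es.symm j).2)
      simp only [hne, dif_neg, not_false_iff]
      congr 1
      simp
  · rintro ⟨x, hx⟩ ⟨y, hy⟩
    have hxs : x ≠ v → x ∈ s := by
      intro h; rcases hx with h' | h'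
      · exact absurd h' h
      · exact_mod_cast h'
    have hys : y ≠ v → y ∈ s := by
      intro h; rcases hy with h' | h'
      · exact absurd h' h
      · exact_mod_cast h'
    by_cases h1 : x = v <;> by_cases h2 : y = v <;>
      simp only [Equiv.ofBijective_apply, h1, h2, dif_pos, dif_neg, not_false_iff,
        completeBipartiteGraph_adj, Subgraph.coe_adj]
    · subst h1; subst h2; simp [hS, hvs]
    · simp [hS, hys h2, Equiv.ofBijective, h2]
    · simp [hS, hxs h1, Equiv.ofBijective, h1]
    · simp [hS, h1, h2, Equiv.ofBijective]

section Main
variable {α V : Type*} [Fintype α] [DecidableEq α] [Fintype V] [DecidableEq V]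
  (H : SimpleGraph α) (G : SimpleGraph V)

/-- chosen isomorphism for a copy -/
noncomputable def theIso (T : {T : G.Subgraph // Nonempty (T.coe ≃g H)}) : T.1.coe ≃g H :=
  T.2.some

variable (p : {v : α // IsDomVert H v} × {T : G.Subgraph // Nonempty (T.coe ≃g H)})

noncomputable def theV : V := ((theIso H G p.2).symm p.1.1 : p.2.1.verts)

lemma theV_mem : theV H G p ∈ p.2.1.verts := ((theIso H G p.2).symm p.1.1).2

noncomputable def theS : Finset V := (p.2.1.verts \ {theV H G p}).toFinset

lemma mem_theS {x : V} : x ∈ theS H G p ↔ x ∈ p.2.1.verts ∧ x ≠ theV H G p := by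
  simp [theS, Set.mem_toFinset]

lemma adj_theS {x : V} (hx : x ∈ theS H G p) : p.2.1.Adj (theV H G p) x := by
  obtain ⟨hx1, hx2⟩ := (mem_theS H G p).1 hx
  set φ := theIso H G p.2
  have hne : φ ⟨x, hx1⟩ ≠ p.1.1 := by
    intro h
    apply hx2
    have : (⟨x, hx1⟩ : p.2.1.verts) = φ.symm p.1.1 := by
      rw [← h]; simp
    exact congrArg Subtype.val this
  have hadj : H.Adj p.1.1 (φ ⟨x, hx1⟩) := p.1.2 _ hne
  have : p.2.1.coe.Adj (φ.symm p.1.1) ⟨x, hx1⟩ := by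
    rw [← φ.map_rel_iff]
    simpa using hadj
  exact this
end Main

section Main2
set_option linter.unusedSectionVars false
variable {α V : Type*} [Fintype α] [DecidableEq α] [Fintype V] [DecidableEq V]
  (H : SimpleGraph α) (G : SimpleGraph V) {t : ℕ} (hcard : Fintype.card α = t)
  (p : {v : α // IsDomVert H v} × {T : G.Subgraph // Nonempty (T.coe ≃g H)})

include hcard in
lemma card_verts : Fintype.card p.2.1.verts = t := by
  rw [← hcard]
  exact Fintype.card_congr (theIso H G p.2).toEquiv

include hcard in
lemma card_theS : (theS H G p).card = t - 1 := by
  have h2 : theS H G p = (p.2.1.verts.toFinset).erase (theV H G p) := by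
    ext x
    simp [mem_theS, Finset.mem_erase, Set.mem_toFinset, and_comm]
  rw [h2, Finset.card_erase_of_mem (by simp [Set.mem_toFinset, theV_mem])]
  rw [Set.toFinset_card]
  have h3 : Fintype.card ↥p.2.1.verts = t := by
    have h4 := card_verts H G hcard p
    convert h4 using 2 <;> exact Subsingleton.elim _ _
  omega

end Main2

section Main3
set_option linter.unusedSectionVars false
variable {α V : Type*} [Fintype α] [DecidableEq α] [Fintype V] [DecidableEq V]
  (H : SimpleGraph α) (G : SimpleGraph V) {t : ℕ} (hcard : Fintype.card α = t)
  (p : {v : α // IsDomVert H v} × {T : G.Subgraph // Nonempty (T.coe ≃g H)})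

noncomputable def theE : {x // x ∈ theS H G p} ≃ Fin (t - 1) :=
  Finset.equivFinOfCardEq (card_theS H G hcard p)

noncomputable def theC : (⊤ : SimpleGraph (Fin (t - 1))).Subgraph where
  verts := Set.univ
  Adj i j := p.2.1.Adj ((theE H G hcard p).symm i) ((theE H G hcard p).symm j)
  adj_sub := by
    intro i j h
    have hne : ((theE H G hcard p).symm i : V) ≠ ((theE H G hcard p).symm j : V) :=
      (p.2.1.adj_sub h).ne
    simp only [SimpleGraph.top_adj]
    intro hij
    exact hne (by rw [hij])
  edge_vert := by intro i j _; trivial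
  symm := ⟨fun i j h => p.2.1.adj_symm h⟩

lemma theC_adj (i j : Fin (t - 1)) :
    (theC H G hcard p).Adj i j ↔
      p.2.1.Adj ((theE H G hcard p).symm i) ((theE H G hcard p).symm j) := Iff.rfl

end Main3

section Main4
set_option linter.unusedSectionVars false
variable {α V : Type*} [Fintype α] [DecidableEq α] [Fintype V] [DecidableEq V]
  (H : SimpleGraph α) (G : SimpleGraph V) {t : ℕ} (hcard : Fintype.card α = t)
  (p : {v : α // IsDomVert H v} × {T : G.Subgraph // Nonempty (T.coe ≃g H)})

lemma swap_adj' {w v₀ : α} (hw : IsDomVert H w) (hv : IsDomVert H v₀) (a b : α) :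
    H.Adj (Equiv.swap w v₀ a) (Equiv.swap w v₀ b) ↔ H.Adj a b := swap_adj H hw hv a b

include hcard in
lemma theC_iso_nonempty {v₀ : α} (hv₀ : IsDomVert H v₀) :
    Nonempty ((theC H G hcard p).coe ≃g H.induce ({v₀}ᶜ : Set α)) := by
  set φ := theIso H G p.2 with hφ
  have hw : IsDomVert H p.1.1 := p.1.2
  set e := theE H G hcard p with he
  have hmv : ∀ i : Fin (t-1), (e.symm i : V) ∈ p.2.1.verts :=
    fun i => ((mem_theS H G p).1 (e.symm i).2).1
  have hnv : ∀ i, (e.symm i : V) ≠ theV H G p :=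
    fun i => ((mem_theS H G p).1 (e.symm i).2).2
  have hphine : ∀ i, φ ⟨(e.symm i : V), hmv i⟩ ≠ p.1.1 := by
    intro i h
    apply hnv i
    have h2 : (⟨(e.symm i : V), hmv i⟩ : p.2.1.verts) = φ.symm p.1.1 := by rw [← h]; simp
    exact congrArg Subtype.val h2
  have hswmem : ∀ i, Equiv.swap p.1.1 v₀ (φ ⟨(e.symm i : V), hmv i⟩) ∈ ({v₀}ᶜ : Set α) := by
    intro i h
    simp only [Set.mem_compl_iff, Set.mem_singleton_iff, not_not] at h
    exact hphine i (by
      have := congrArg (Equiv.swap p.1.1 v₀) h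
      simpa [Equiv.swap_apply_right] using this)
  -- inverse direction pieces
  have hbne : ∀ y : ({v₀}ᶜ : Set α), Equiv.swap p.1.1 v₀ (y : α) ≠ p.1.1 := by
    intro y h
    have := congrArg (Equiv.swap p.1.1 v₀) h
    simp only [Equiv.swap_apply_self, Equiv.swap_apply_left] at this
    exact y.2 (by simp [this])
  have hzmem : ∀ y : ({v₀}ᶜ : Set α),
      ((φ.symm (Equiv.swap p.1.1 v₀ (y : α))) : V) ∈ theS H G p := by
    intro y
    rw [mem_theS]
    refine ⟨(φ.symm _).2, ?_⟩
    intro h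
    apply hbne y
    have h2 : φ.symm (Equiv.swap p.1.1 v₀ (y : α)) = φ.symm p.1.1 := by
      apply Subtype.ext
      exact h
    have := congrArg φ h2
    simpa using this
  refine ⟨⟨⟨fun i => ⟨Equiv.swap p.1.1 v₀ (φ ⟨(e.symm i.1 : V), hmv i.1⟩), hswmem i.1⟩,
      fun y => ⟨e ⟨((φ.symm (Equiv.swap p.1.1 v₀ (y : α))) : V), hzmem y⟩, Set.mem_univ _⟩,
      ?_, ?_⟩, ?_⟩⟩
  · intro i
    apply Subtype.ext
    show e _ = i.1
    rw [Equiv.apply_eq_iff_eq_symm_apply]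
    exact Subtype.ext (by simp)
  · intro y
    apply Subtype.ext
    simp only [Equiv.symm_apply_apply]
    simp [Equiv.swap_apply_self]
  · intro a b
    simp only [Equiv.coe_fn_mk, comap_adj, Function.Embedding.coe_subtype, Subgraph.coe_adj]
    rw [swap_adj' H hw hv₀, φ.map_rel_iff]
    rfl
end Main4

section Main5
set_option linter.unusedSectionVars false
variable {α V : Type*} [Fintype α] [DecidableEq α] [Fintype V] [DecidableEq V]
  (H : SimpleGraph α) (G : SimpleGraph V) {t : ℕ} (hcard : Fintype.card α = t)
  (p : {v : α // IsDomVert H v} × {T : G.Subgraph // Nonempty (T.coe ≃g H)})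

lemma theS_subset : theS H G p ⊆ G.neighborFinset (theV H G p) := by
  intro x hx
  rw [SimpleGraph.mem_neighborFinset]
  exact p.2.1.adj_sub (adj_theS H G p hx)

lemma theV_spec : theIso H G p.2 ⟨theV H G p, theV_mem H G p⟩ = p.1.1 := by
  show theIso H G p.2 ((theIso H G p.2).symm p.1.1) = p.1.1
  exact Equiv.apply_symm_apply _ _

include hcard in
lemma adj_char (x y : V) :
    p.2.1.Adj x y ↔
      (x = theV H G p ∧ y ∈ theS H G p) ∨ (y = theV H G p ∧ x ∈ theS H G p) ∨
      (∃ (hx : x ∈ theS H G p) (hy : y ∈ theS H G p),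
        (theC H G hcard p).Adj (theE H G hcard p ⟨x, hx⟩) (theE H G hcard p ⟨y, hy⟩)) := by
  constructor
  · intro h
    have hx := p.2.1.edge_vert h
    have hy := p.2.1.edge_vert (p.2.1.adj_symm h)
    have hne : x ≠ y := (p.2.1.adj_sub h).ne
    by_cases h1 : x = theV H G p
    · exact Or.inl ⟨h1, (mem_theS H G p).2 ⟨hy, fun h2 => hne (h1.trans h2.symm)⟩⟩
    by_cases h2 : y = theV H G p
    · exact Or.inr (Or.inl ⟨h2, (mem_theS H G p).2 ⟨hx, h1⟩⟩)
    refine Or.inr (Or.inr ⟨(mem_theS H G p).2 ⟨hx, h1⟩, (mem_theS H G p).2 ⟨hy, h2⟩, ?_⟩)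
    rw [theC_adj]
    simpa using h
  · rintro (⟨rfl, hy⟩ | ⟨rfl, hx⟩ | ⟨hx, hy, hadj⟩)
    · exact adj_theS H G p hy
    · exact (adj_theS H G p hx).symm
    · rw [theC_adj] at hadj
      simpa using hadj

lemma equivFin_congr {m : ℕ} (s s' : Finset V) (h : s = s') (hc : s.card = m)
    (hc' : s'.card = m) (x : V) (hx : x ∈ s) (hx' : x ∈ s') :
    Finset.equivFinOfCardEq hc ⟨x, hx⟩ = Finset.equivFinOfCardEq hc' ⟨x, hx'⟩ := by
  subst h; rfl

lemma theIso_congr (T T' : {T : G.Subgraph // Nonempty (T.coe ≃g H)}) (h : T = T')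
    (x : V) (hx : x ∈ T.1.verts) (hx' : x ∈ T'.1.verts) :
    theIso H G T ⟨x, hx⟩ = theIso H G T' ⟨x, hx'⟩ := by
  subst h; rfl
end Main5

section Main6
set_option linter.unusedSectionVars false
variable {α V : Type*} [Fintype α] [DecidableEq α] [Fintype V] [DecidableEq V]
  (H : SimpleGraph α) (G : SimpleGraph V) {t : ℕ} (hcard : Fintype.card α = t)
  (p q : {v : α // IsDomVert H v} × {T : G.Subgraph // Nonempty (T.coe ≃g H)})

include hcard in
lemma theE_congr (hS : theS H G p = theS H G q) (x : V) (hx : x ∈ theS H G p)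
    (hx' : x ∈ theS H G q) :
    theE H G hcard p ⟨x, hx⟩ = theE H G hcard q ⟨x, hx'⟩ :=
  equivFin_congr _ _ hS _ _ x hx hx'

include hcard in
lemma third_mono (hS : theS H G p = theS H G q) (hC : theC H G hcard p = theC H G hcard q)
    {x y : V} :
    (∃ (hx : x ∈ theS H G p) (hy : y ∈ theS H G p),
        (theC H G hcard p).Adj (theE H G hcard p ⟨x, hx⟩) (theE H G hcard p ⟨y, hy⟩)) →
    (∃ (hx : x ∈ theS H G q) (hy : y ∈ theS H G q),
        (theC H G hcard q).Adj (theE H G hcard q ⟨x, hx⟩) (theE H G hcard q ⟨y, hy⟩)) := by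
  rintro ⟨hx, hy, h⟩
  refine ⟨hS ▸ hx, hS ▸ hy, ?_⟩
  rw [← hC, ← theE_congr H G hcard p q hS x hx (hS ▸ hx),
    ← theE_congr H G hcard p q hS y hy (hS ▸ hy)]
  exact h

include hcard in
lemma key_inj (hV : theV H G p = theV H G q) (hS : theS H G p = theS H G q)
    (hC : theC H G hcard p = theC H G hcard q) : p = q := by
  have hvmem : ∀ pp (x : V), x ∈ pp.2.1.verts ↔ (x = theV H G pp ∨ x ∈ theS H G pp) := by
    intro pp x
    rw [mem_theS]
    constructor
    · intro hxv
      by_cases h : x = theV H G pp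
      · exact Or.inl h
      · exact Or.inr ⟨hxv, h⟩
    · rintro (rfl | ⟨h1, _⟩)
      · exact theV_mem H G pp
      · exact h1
  have hT : p.2.1 = q.2.1 := by
    apply SimpleGraph.Subgraph.ext
    · ext x
      rw [hvmem p, hvmem q, hV, hS]
    · funext x y
      apply propext
      rw [adj_char H G hcard p, adj_char H G hcard q]
      constructor
      · rintro (⟨h1, h2⟩ | ⟨h1, h2⟩ | h)
        · exact Or.inl ⟨h1.trans hV, hS ▸ h2⟩
        · exact Or.inr (Or.inl ⟨h1.trans hV, hS ▸ h2⟩)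
        · exact Or.inr (Or.inr (third_mono H G hcard p q hS hC h))
      · rintro (⟨h1, h2⟩ | ⟨h1, h2⟩ | h)
        · exact Or.inl ⟨h1.trans hV.symm, hS ▸ h2⟩
        · exact Or.inr (Or.inl ⟨h1.trans hV.symm, hS ▸ h2⟩)
        · exact Or.inr (Or.inr (third_mono H G hcard q p hS.symm hC.symm h))
  have h2 : p.2 = q.2 := Subtype.ext hT
  have h1 : p.1.1 = q.1.1 := by
    rw [← theV_spec H G p, ← theV_spec H G q]
    rw [theIso_congr H G p.2 q.2 h2 (theV H G p) (theV_mem H G p) (hV ▸ theV_mem H G q)]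
    exact congrArg _ (Subtype.ext hV)
  exact Prod.ext (Subtype.ext h1) h2
end Main6


theorem stmt_17 {α V : Type*} [Fintype α] [DecidableEq α] [Fintype V] [DecidableEq V]
    (H : SimpleGraph α) (G : SimpleGraph V)
    (t r n : ℕ) (hcard : Fintype.card α = t) (hr : 1 ≤ r) (hn : Fintype.card V = n)
    (v₀ : α) (hv₀ : IsDomVert H v₀)
    -- `G` is `S_r`-free, where `S_r` is the star with `r` leaves.
    (hfree : ∀ S : G.Subgraph,
      IsEmpty (S.coe ≃g completeBipartiteGraph (Fin 1) (Fin r))) :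
    Nat.card {v : α // IsDomVert H v} * _root_.copyCount H G ≤
      n * (r - 1).choose (t - 1) *
        _root_.copyCount (H.induce ({v₀}ᶜ : Set α)) (⊤ : SimpleGraph (Fin (t - 1))) := by
  classical
  set Copies := {C : (⊤ : SimpleGraph (Fin (t - 1))).Subgraph //
    Nonempty (C.coe ≃g H.induce ({v₀}ᶜ : Set α))} with hCopies
  let Target := Σ _v : V, ({s : Finset V // s ⊆ G.neighborFinset _v ∧ s.card = t - 1} × Copies)
  let Φ : ({v : α // IsDomVert H v} × {T : G.Subgraph // Nonempty (T.coe ≃g H)}) → Target :=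
    fun p => ⟨theV H G p, (⟨theS H G p, theS_subset H G p, card_theS H G hcard p⟩,
      ⟨theC H G hcard p, theC_iso_nonempty H G hcard p hv₀⟩)⟩
  have hinj : Function.Injective Φ := by
    intro p q h
    have hV : theV H G p = theV H G q := congrArg (fun x : Target => x.1) h
    have hS : theS H G p = theS H G q := congrArg (fun x : Target => x.2.1.1) h
    have hC : theC H G hcard p = theC H G hcard q := congrArg (fun x : Target => x.2.2.1) h
    exact key_inj H G hcard p q hV hS hC
  have h1 : Nat.card {v : α // IsDomVert H v} * _root_.copyCount H G ≤ Nat.card Target := by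
    rw [_root_.copyCount, ← Nat.card_prod]
    exact Nat.card_le_card_of_injective Φ hinj
  refine h1.trans ?_
  letI : Fintype Copies := Fintype.ofFinite Copies
  have h2 : Nat.card Target = ∑ v : V, ((G.degree v).choose (t - 1)) * Fintype.card Copies := by
    rw [Nat.card_eq_fintype_card, Fintype.card_sigma]
    congr 1
    funext v
    rw [Fintype.card_prod]
    congr 1
    have e : {s : Finset V // s ⊆ G.neighborFinset v ∧ s.card = t - 1} ≃
        {s : Finset V // s ∈ (G.neighborFinset v).powersetCard (t - 1)} :=
      Equiv.subtypeEquivRight (fun s => by rw [Finset.mem_powersetCard])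
    rw [Fintype.card_congr e, Fintype.card_coe, Finset.card_powersetCard]
    rfl
  rw [h2]
  have h3 : ∀ v : V, ((G.degree v).choose (t - 1)) * Fintype.card Copies ≤
      (r - 1).choose (t - 1) * Fintype.card Copies := by
    intro v
    exact Nat.mul_le_mul_right _ (Nat.choose_le_choose _ (deg_le G r hr hfree v))
  refine (Finset.sum_le_sum (fun v _ => h3 v)).trans ?_
  rw [Finset.sum_const, Finset.card_univ, hn, smul_eq_mul, ← mul_assoc]
  rw [_root_.copyCount, ← Nat.card_eq_fintype_card]
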